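/- The improper integral of -log(1-x)/x over the interval (0, 1/2) equals pi^2/12 - (log 2)^2/2. (This is the evaluation of the integral I_1, up to the scale factor 3, appearing in the paper's computation of the volume of the unit tangent bundle of the modular surface.) -/

import Mathlib

open MeasureTheory Real Set

/-! ### Auxiliary lemmas -/

lemma aux_integrableOn_neg_log :
    IntegrableOn (fun x => -Real.log x) (Set.Ioc (0:ℝ) (1/2)) := by
  have hcont : ContinuousOn (fun x : ℝ => x - x * Real.log x) (Set.Icc 0 (1/2)) :=
    (continuous_id.sub Real.continuous_mul_log).continuousOn
  have hderiv : ∀ x ∈ Set.Ioo (0:ℝ) (1/2),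
      HasDerivAt (fun x : ℝ => x - x * Real.log x) (-Real.log x) x := by
    intro x hx
    have h := (hasDerivAt_id x).sub ((Real.hasDerivAt_mul_log hx.1.ne'))
    exact h.congr_deriv (by ring)
  have hpos : ∀ x ∈ Set.Ioo (0:ℝ) (1/2), 0 ≤ -Real.log x := by
    intro x hx
    have : Real.log x ≤ 0 := Real.log_nonpos hx.1.le (by linarith [hx.2])
    linarith
  exact intervalIntegral.integrableOn_deriv_of_nonneg hcont hderiv hpos

lemma aux_intervalIntegrable_neg_log :
    IntervalIntegrable (fun x => -Real.log x) volume 0 (1/2) := by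
  rw [intervalIntegrable_iff_integrableOn_Ioc_of_le (by norm_num)]
  exact aux_integrableOn_neg_log

lemma aux_intervalIntegrable_neg_log_div :
    IntervalIntegrable (fun x => -Real.log x / (1 - x)) volume 0 (1/2) := by
  have hg : ContinuousOn (fun x : ℝ => (1 - x)⁻¹) (Set.uIcc (0:ℝ) (1/2)) := by
    apply ContinuousOn.inv₀ (by fun_prop)
    intro x hx
    rw [Set.uIcc_of_le (by norm_num)] at hx
    intro h; nlinarith [hx.1, hx.2]
  have := aux_intervalIntegrable_neg_log.mul_continuousOn hg
  simpa [div_eq_mul_inv] using this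

lemma aux_neg_log_one_sub_div_bound {x : ℝ} (hx0 : 0 < x) (hx2 : x ≤ 1/2) :
    ‖-Real.log (1 - x) / x‖ ≤ 2 := by
  have h1x : (0:ℝ) < 1 - x := by linarith
  have hnn : 0 ≤ -Real.log (1 - x) := by
    have : Real.log (1 - x) ≤ 0 := Real.log_nonpos (by linarith) (by linarith)
    linarith
  rw [Real.norm_of_nonneg (div_nonneg hnn hx0.le), div_le_iff₀ hx0]
  have hlog : Real.log ((1 - x)⁻¹) ≤ (1 - x)⁻¹ - 1 :=
    Real.log_le_sub_one_of_pos (by positivity)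
  rw [Real.log_inv] at hlog
  have hinv : (1 - x)⁻¹ ≤ 1 + 2 * x := by
    rw [inv_le_iff_one_le_mul₀ h1x]
    nlinarith
  nlinarith

lemma aux_intervalIntegrable_main :
    IntervalIntegrable (fun x => -Real.log (1 - x) / x) volume 0 (1/2) := by
  rw [intervalIntegrable_iff_integrableOn_Ioc_of_le (by norm_num)]
  apply Measure.integrableOn_of_bounded (M := 2) (by simp)
  · exact (((measurable_const.sub measurable_id).log.neg.div measurable_id)).aestronglyMeasurable
  · rw [ae_restrict_iff' measurableSet_Ioc]
    filter_upwards with x hx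
    exact aux_neg_log_one_sub_div_bound hx.1 hx.2

lemma aux_hasSum_A {x : ℝ} (hx0 : 0 < x) (hx1 : x < 1) :
    HasSum (fun n : ℕ => x ^ n / (n + 1)) (-Real.log (1 - x) / x) := by
  have h := (Real.hasSum_pow_div_log_of_abs_lt_one
    (by rw [abs_of_pos hx0]; exact hx1)).div_const x
  convert h using 2 with n
  · rfl
  rw [div_div, mul_comm, ← div_div, pow_succ, mul_div_assoc, div_self hx0.ne']
  simp

lemma aux_hasSum_B {x : ℝ} (hx0 : 0 < x) (hx1 : x < 1) :
    HasSum (fun n : ℕ => -Real.log x * x ^ n) (-Real.log x / (1 - x)) := by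
  have h := (hasSum_geometric_of_lt_one hx0.le hx1).mul_left (-Real.log x)
  simpa [div_eq_mul_inv] using h

lemma aux_setIntegral_Ioo_eq (a b : ℝ) (h : a ≤ b) (f : ℝ → ℝ) :
    ∫ x in Set.Ioo a b, f x = ∫ x in a..b, f x := by
  rw [intervalIntegral.integral_of_le h, integral_Ioc_eq_integral_Ioo]

lemma aux_int_pow_div (n : ℕ) (c : ℝ) (hc : 0 ≤ c) :
    ∫ x in Set.Ioo (0:ℝ) c, x ^ n / (n + 1) = c ^ (n + 1) / ((n:ℝ) + 1) ^ 2 := by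
  rw [aux_setIntegral_Ioo_eq 0 c hc, intervalIntegral.integral_div, integral_pow]
  rw [zero_pow (Nat.succ_ne_zero n)]
  rw [sub_zero, div_div, ← sq]

lemma aux_int_neg_log_mul_pow (n : ℕ) :
    ∫ x in (0:ℝ)..(1/2), -Real.log x * x ^ n
      = (1/2:ℝ) ^ (n + 1) / ((n:ℝ) + 1) ^ 2
        + Real.log 2 * ((1/2:ℝ) ^ (n + 1) / ((n:ℝ) + 1)) := by
  set G : ℝ → ℝ := fun x => x ^ (n + 1) / ((n:ℝ) + 1) ^ 2 - x ^ n * (x * Real.log x) / ((n:ℝ) + 1)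
    with hG
  have hn1 : ((n:ℝ) + 1) ≠ 0 := by positivity
  have hcont : ContinuousOn G (Set.Icc (0:ℝ) (1/2)) := by
    apply Continuous.continuousOn
    exact ((continuous_pow (n+1)).div_const _).sub
      (((continuous_pow n).mul Real.continuous_mul_log).div_const _)
  have hderiv : ∀ x ∈ Set.Ioo (0:ℝ) (1/2),
      HasDerivAt G (-Real.log x * x ^ n) x := by
    intro x hx
    have hx0 : x ≠ 0 := hx.1.ne'
    have hrw : G = fun y : ℝ => y ^ (n + 1) / ((n:ℝ) + 1) ^ 2
        - y ^ (n + 1) * Real.log y / ((n:ℝ) + 1) := by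
      funext y; rw [hG]; ring
    rw [hrw]
    have h1 : HasDerivAt (fun y : ℝ => y ^ (n + 1)) (((n:ℝ) + 1) * x ^ n) x := by
      simpa using hasDerivAt_pow (n + 1) x
    have h2 : HasDerivAt (fun y : ℝ => y ^ (n + 1) * Real.log y)
        (((n:ℝ) + 1) * x ^ n * Real.log x + x ^ (n + 1) * x⁻¹) x :=
      h1.mul (Real.hasDerivAt_log hx0)
    have h := (h1.div_const (((n:ℝ) + 1) ^ 2)).sub (h2.div_const ((n:ℝ) + 1))
    refine h.congr_deriv ?_
    field_simp
    ring
  have hint : IntervalIntegrable (fun x => -Real.log x * x ^ n) volume 0 (1/2) :=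
    aux_intervalIntegrable_neg_log.mul_continuousOn (continuous_pow n).continuousOn
  have := intervalIntegral.integral_eq_sub_of_hasDeriv_right_of_le (by norm_num : (0:ℝ) ≤ 1/2)
    hcont (fun x hx => (hderiv x hx).hasDerivWithinAt) hint
  rw [this, hG]
  norm_num
  rw [one_div, Real.log_inv, pow_succ]
  ring

lemma aux_lintegral_nnnorm_eq {s : Set ℝ} (hs : MeasurableSet s) {f : ℝ → ℝ}
    (hi : IntegrableOn f s) (h0 : ∀ x ∈ s, 0 ≤ f x) :
    ∫⁻ x in s, ‖f x‖₊ ∂volume = ENNReal.ofReal (∫ x in s, f x) := by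
  rw [ofReal_integral_eq_lintegral_ofReal hi ((ae_restrict_iff' hs).mpr (ae_of_all _ h0))]
  apply lintegral_congr_ae
  filter_upwards [(ae_restrict_iff' hs).mpr (ae_of_all _ h0)] with x hx
  rw [← Real.enorm_eq_ofReal hx, enorm_eq_nnnorm]

lemma aux_integral_tsum_of_nonneg {s : Set ℝ} (hs : MeasurableSet s) {f : ℕ → ℝ → ℝ}
    (hint : ∀ n, IntegrableOn (f n) s) (h0 : ∀ n, ∀ x ∈ s, 0 ≤ f n x)
    (hsum : Summable fun n => ∫ x in s, f n x) :
    ∫ x in s, ∑' n, f n x = ∑' n, ∫ x in s, f n x := by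
  apply integral_tsum (fun n => (hint n).aestronglyMeasurable)
  have h1 : ∀ n, ∫⁻ x in s, ‖f n x‖₊ ∂volume = ENNReal.ofReal (∫ x in s, f n x) :=
    fun n => aux_lintegral_nnnorm_eq hs (hint n) (h0 n)
  simp_rw [enorm_eq_nnnorm, h1]
  rw [← ENNReal.ofReal_tsum_of_nonneg (fun n => setIntegral_nonneg hs (h0 n)) hsum]
  exact ENNReal.ofReal_ne_top

lemma aux_summable_a : Summable (fun n : ℕ => (1/2:ℝ) ^ (n + 1) / ((n:ℝ) + 1) ^ 2) := by
  have hg : Summable (fun n : ℕ => (1/2:ℝ) * (1/2:ℝ) ^ n) :=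
    (summable_geometric_of_lt_one (by norm_num) (by norm_num : (1/2:ℝ) < 1)).mul_left (1/2:ℝ)
  refine Summable.of_nonneg_of_le (fun n => by positivity) (fun n => ?_) hg
  calc (1/2:ℝ) ^ (n + 1) / ((n:ℝ) + 1) ^ 2 ≤ (1/2:ℝ) ^ (n + 1) := by
        apply div_le_self (by positivity)
        have h1 : (1:ℝ) ≤ (n:ℝ) + 1 := by have := Nat.cast_nonneg (α := ℝ) n; linarith
        nlinarith
    _ = 1/2 * (1/2:ℝ) ^ n := by rw [pow_succ]; ring

lemma aux_hasSum_basel_shift : HasSum (fun n : ℕ => 1 / ((n:ℝ) + 1) ^ 2) (π ^ 2 / 6) := by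
  have h := (hasSum_nat_add_iff' (f := fun n : ℕ => (1:ℝ) / (n:ℝ) ^ 2) 1).mpr hasSum_zeta_two
  simp only [Finset.range_one, Finset.sum_singleton, Nat.cast_zero] at h
  norm_num at h
  convert h using 2 with n
  · rfl
  norm_num

lemma aux_hasSum_geom_log :
    HasSum (fun n : ℕ => (1/2:ℝ) ^ (n + 1) / ((n:ℝ) + 1)) (Real.log 2) := by
  have h := Real.hasSum_pow_div_log_of_abs_lt_one (x := (1/2:ℝ)) (by rw [abs_of_pos]; norm_num; norm_num)
  have h2 : (1:ℝ) - 1/2 = 2⁻¹ := by norm_num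
  rw [h2, Real.log_inv, neg_neg] at h
  exact h

/-- value of A -/
lemma aux_A_eq :
    ∫ x in Set.Ioo (0:ℝ) (1/2), -Real.log (1 - x) / x
      = ∑' n : ℕ, (1/2:ℝ) ^ (n + 1) / ((n:ℝ) + 1) ^ 2 := by
  have h1 : ∫ x in Set.Ioo (0:ℝ) (1/2), -Real.log (1 - x) / x
      = ∫ x in Set.Ioo (0:ℝ) (1/2), ∑' n : ℕ, x ^ n / ((n:ℝ) + 1) := by
    apply setIntegral_congr_fun measurableSet_Ioo
    intro x hx
    exact ((aux_hasSum_A hx.1 (by linarith [hx.2])).tsum_eq).symm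
  rw [h1, aux_integral_tsum_of_nonneg measurableSet_Ioo]
  · exact tsum_congr fun n => aux_int_pow_div n (1/2) (by norm_num)
  · intro n
    apply ((continuous_pow n).div_const _).integrableOn_Icc.mono_set Set.Ioo_subset_Icc_self
  · intro n x hx
    have := hx.1.le
    positivity
  · apply Summable.congr aux_summable_a
    intro n
    exact (aux_int_pow_div n (1/2) (by norm_num)).symm

/-- value of J -/
lemma aux_J_eq :
    ∫ x in Set.Ioo (0:ℝ) 1, -Real.log (1 - x) / x = π ^ 2 / 6 := by
  have h1 : ∫ x in Set.Ioo (0:ℝ) 1, -Real.log (1 - x) / x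
      = ∫ x in Set.Ioo (0:ℝ) 1, ∑' n : ℕ, x ^ n / ((n:ℝ) + 1) := by
    apply setIntegral_congr_fun measurableSet_Ioo
    intro x hx
    exact ((aux_hasSum_A hx.1 hx.2).tsum_eq).symm
  rw [h1, aux_integral_tsum_of_nonneg measurableSet_Ioo]
  · rw [tsum_congr fun n => aux_int_pow_div n 1 (by norm_num)]
    simp only [one_pow]
    exact aux_hasSum_basel_shift.tsum_eq
  · intro n
    apply ((continuous_pow n).div_const _).integrableOn_Icc.mono_set Set.Ioo_subset_Icc_self
  · intro n x hx
    have := hx.1.le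
    positivity
  · apply Summable.congr aux_hasSum_basel_shift.summable
    intro n
    rw [aux_int_pow_div n 1 (by norm_num), one_pow]

/-- value of B -/
lemma aux_B_eq :
    ∫ x in Set.Ioo (0:ℝ) (1/2), -Real.log x / (1 - x)
      = (∑' n : ℕ, (1/2:ℝ) ^ (n + 1) / ((n:ℝ) + 1) ^ 2) + (Real.log 2) ^ 2 := by
  have h1 : ∫ x in Set.Ioo (0:ℝ) (1/2), -Real.log x / (1 - x)
      = ∫ x in Set.Ioo (0:ℝ) (1/2), ∑' n : ℕ, -Real.log x * x ^ n := by
    apply setIntegral_congr_fun measurableSet_Ioo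
    intro x hx
    exact ((aux_hasSum_B hx.1 (by linarith [hx.2])).tsum_eq).symm
  have hval : ∀ n : ℕ, ∫ x in Set.Ioo (0:ℝ) (1/2), -Real.log x * x ^ n
      = (1/2:ℝ) ^ (n + 1) / ((n:ℝ) + 1) ^ 2
        + Real.log 2 * ((1/2:ℝ) ^ (n + 1) / ((n:ℝ) + 1)) := by
    intro n
    rw [aux_setIntegral_Ioo_eq 0 (1/2) (by norm_num)]
    exact aux_int_neg_log_mul_pow n
  have hsummable2 : Summable (fun n : ℕ => Real.log 2 * ((1/2:ℝ) ^ (n + 1) / ((n:ℝ) + 1))) :=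
    (aux_hasSum_geom_log.mul_left (Real.log 2)).summable
  rw [h1, aux_integral_tsum_of_nonneg measurableSet_Ioo]
  · rw [tsum_congr hval, Summable.tsum_add aux_summable_a hsummable2,
      (aux_hasSum_geom_log.mul_left (Real.log 2)).tsum_eq, sq]
  · intro n
    have h := aux_intervalIntegrable_neg_log.mul_continuousOn (continuous_pow n).continuousOn
    rw [intervalIntegrable_iff_integrableOn_Ioc_of_le (by norm_num)] at h
    exact h.mono_set Set.Ioo_subset_Ioc_self
  · intro n x hx
    have hx0 := hx.1.le
    have hlog : Real.log x ≤ 0 := Real.log_nonpos hx0 (by linarith [hx.2])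
    have : 0 ≤ -Real.log x := by linarith
    positivity
  · apply Summable.congr (aux_summable_a.add hsummable2)
    intro n
    exact (hval n).symm

/-- substitution -/
lemma aux_subst :
    ∫ x in (1/2:ℝ)..1, -Real.log (1 - x) / x = ∫ x in (0:ℝ)..(1/2), -Real.log x / (1 - x) := by
  have h := intervalIntegral.integral_comp_sub_left
    (a := (1/2:ℝ)) (b := 1) (fun y => -Real.log y / (1 - y)) 1
  norm_num at h
  exact h

lemma aux_intervalIntegrable_right :
    IntervalIntegrable (fun x => -Real.log (1 - x) / x) volume (1/2) 1 := by
  have h := aux_intervalIntegrable_neg_log_div.comp_sub_left 1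
  norm_num at h
  exact h.symm

/-- The improper integral of `-log(1-x)/x` over `(0, 1/2)` equals
`π²/12 - (log 2)²/2`. -/
theorem integral_neg_log_one_sub_div_self :
    ∫ x in Set.Ioo (0 : ℝ) (1 / 2), -Real.log (1 - x) / x
      = Real.pi ^ 2 / 12 - (Real.log 2) ^ 2 / 2 := by
  set S : ℝ := ∑' n : ℕ, (1/2:ℝ) ^ (n + 1) / ((n:ℝ) + 1) ^ 2 with hS
  have hsplit : (∫ x in (0:ℝ)..(1/2), -Real.log (1 - x) / x)
      + ∫ x in (1/2:ℝ)..1, -Real.log (1 - x) / x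
      = ∫ x in (0:ℝ)..1, -Real.log (1 - x) / x :=
    intervalIntegral.integral_add_adjacent_intervals aux_intervalIntegrable_main
      aux_intervalIntegrable_right
  rw [aux_subst, ← aux_setIntegral_Ioo_eq 0 (1/2) (by norm_num),
    ← aux_setIntegral_Ioo_eq 0 (1/2) (by norm_num),
    ← aux_setIntegral_Ioo_eq 0 1 (by norm_num)] at hsplit
  rw [aux_A_eq, aux_B_eq, aux_J_eq, ← hS] at hsplit
  rw [aux_A_eq, ← hS]
  linarith
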